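/- Burnt gas temperature (equal specific heats): let c < 0, ṁ = −ρ_s·c > 0, c_p > 0, λ_s, λ_g > 0, D_s = λ_s/(ρ_s·c_p), ν < 0, M > 0, Q_mol ∈ ℝ and Q_p ∈ ℝ. Suppose T : ℝ → ℝ is continuous, C² on (−∞,0) and on (0,∞), with lim_{x→−∞} T(x) = T₀, lim_{x→−∞} T′(x) = 0, lim_{x→+∞} T(x) = T_f and lim_{x→+∞} T′(x) = 0; on the solid side −c·T′(x) − D_s·T″(x) = 0 for x < 0; on the gas side ṁ·T′(x) − (λ_g/c_p)·T″(x) = (Q_mol/c_p)·ω(x) for x > 0, where ω is integrable with ∫₀^∞ ω = −ṁ/(M·ν); and the interface energy balance λ_s·T′(0⁻) = ṁ·Q_p + λ_g·T′(0⁺) holds, T being continuous at 0. Then, with Q_g = −Q_mol/(ν·M), the burnt gas temperature satisfies T_f = T₀ + (Q_g + Q_p)/c_p. -/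

import Mathlib

/-- Burnt gas temperature (equal specific heats `c_s = c_p`): with `c < 0` the
regression velocity, `ṁ = −ρs·c > 0` the mass flow rate, `cp > 0` the common
specific heat, `lams, lamg > 0` the thermal conductivities, `D_s = lams/(ρs·cp)`,
`ν < 0`, `M > 0`, if the temperature `T` is continuous on `ℝ`, C² away from the
interface `x = 0`, tends to `T₀` (with vanishing gradient) at `−∞` and to `T_f`
(with vanishing gradient) at `+∞`, satisfies the solid heat equation
`−c·T′ − D_s·T″ = 0` on `(−∞,0)` and the gas energy equation
`ṁ·T′ − (lamg/cp)·T″ = (Q_mol/cp)·ω` on `(0,∞)` with `∫₀^∞ ω = −ṁ/(M·ν)`, and the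
interface energy balance `lams·T′(0⁻) = ṁ·Q_p + lamg·T′(0⁺)` holds, then with
`Q_g = −Q_mol/(ν·M)` we have `T_f = T₀ + (Q_g + Q_p)/cp`. -/
theorem burnt_gas_temperature_equal_specific_heats
    (c ρs mdot cp lams lamg ν M Qmol Qp T₀ Tf : ℝ)
    (hc : c < 0) (hρs : 0 < ρs) (hmdot : mdot = -(ρs * c))
    (hcp : 0 < cp) (hlams : 0 < lams) (hlamg : 0 < lamg) (hν : ν < 0) (hM : 0 < M)
    (T ω : ℝ → ℝ)
    (hTcont : Continuous T)
    (hTd1 : ∀ x : ℝ, x ≠ 0 → DifferentiableAt ℝ T x)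
    (hTd2 : ∀ x : ℝ, x ≠ 0 → DifferentiableAt ℝ (deriv T) x)
    (hTminf : Filter.Tendsto T Filter.atBot (nhds T₀))
    (hT'minf : Filter.Tendsto (deriv T) Filter.atBot (nhds 0))
    (hTpinf : Filter.Tendsto T Filter.atTop (nhds Tf))
    (hT'pinf : Filter.Tendsto (deriv T) Filter.atTop (nhds 0))
    (hsolid : ∀ x < (0:ℝ),
      -c * deriv T x - (lams / (ρs * cp)) * deriv (deriv T) x = 0)
    (hgas : ∀ x > (0:ℝ),
      mdot * deriv T x - (lamg / cp) * deriv (deriv T) x = (Qmol / cp) * ω x)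
    (hωint : MeasureTheory.IntegrableOn ω (Set.Ioi 0))
    (hωtot : (∫ x in Set.Ioi (0:ℝ), ω x) = -mdot / (M * ν))
    (gl gr : ℝ)
    (hgl : Filter.Tendsto (deriv T) (nhdsWithin 0 (Set.Iio 0)) (nhds gl))
    (hgr : Filter.Tendsto (deriv T) (nhdsWithin 0 (Set.Ioi 0)) (nhds gr))
    (hinterface : lams * gl = mdot * Qp + lamg * gr) :
    Tf = T₀ + (-Qmol / (ν * M) + Qp) / cp := by
  have hmdotpos : 0 < mdot := by
    rw [hmdot]; nlinarith
  set Ds : ℝ := lams / (ρs * cp) with hDs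
  set F : ℝ → ℝ := fun x => -c * T x - Ds * deriv T x with hF
  set G : ℝ → ℝ := fun x => mdot * T x - (lamg / cp) * deriv T x with hGdef
  -- derivative of F is zero on the solid side
  have hFderiv : ∀ x < (0:ℝ), HasDerivAt F 0 x := by
    intro x hx
    have h1 := (hTd1 x (ne_of_lt hx)).hasDerivAt
    have h2 := (hTd2 x (ne_of_lt hx)).hasDerivAt
    have : HasDerivAt F (-c * deriv T x - Ds * deriv (deriv T) x) x :=
      (h1.const_mul (-c)).sub (h2.const_mul Ds)
    rwa [hsolid x hx] at this
  -- F is constant on the negative half-line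
  have hFconst : ∀ a b : ℝ, a ≤ b → b < 0 → F b = F a := by
    intro a b hab hb0
    have hderiv : ∀ x ∈ Set.uIcc a b, HasDerivAt F ((fun _ : ℝ => (0:ℝ)) x) x := by
      intro x hx
      rw [Set.uIcc_of_le hab] at hx
      exact hFderiv x (lt_of_le_of_lt hx.2 hb0)
    have hint : IntervalIntegrable (fun _ : ℝ => (0:ℝ)) MeasureTheory.volume a b :=
      intervalIntegrable_const
    have := intervalIntegral.integral_eq_sub_of_hasDerivAt hderiv hint
    simp at this
    linarith
  -- limit of F at -∞
  have hFminf : Filter.Tendsto F Filter.atBot (nhds (-c * T₀ - Ds * 0)) :=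
    (hTminf.const_mul (-c)).sub (hT'minf.const_mul Ds)
  have hFeqBot : ∀ᶠ x in Filter.atBot, F x = F (-1) := by
    filter_upwards [Filter.eventually_le_atBot (-1 : ℝ)] with x hx
    exact (hFconst x (-1) hx (by norm_num)).symm
  have hFval : -c * T₀ - Ds * 0 = F (-1) :=
    tendsto_nhds_unique hFminf (Filter.Tendsto.congr' (Filter.EventuallyEq.symm (hFeqBot : F =ᶠ[Filter.atBot] fun _ => F (-1))) tendsto_const_nhds)
  -- limit of F at 0⁻
  have hT0left : Filter.Tendsto T (nhdsWithin 0 (Set.Iio 0)) (nhds (T 0)) :=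
    (hTcont.tendsto 0).mono_left nhdsWithin_le_nhds
  have hFleft : Filter.Tendsto F (nhdsWithin 0 (Set.Iio 0)) (nhds (-c * T 0 - Ds * gl)) :=
    (hT0left.const_mul (-c)).sub (hgl.const_mul Ds)
  have hFeqLeft : ∀ᶠ x in nhdsWithin (0:ℝ) (Set.Iio 0), F x = F (-1) := by
    filter_upwards [Ioo_mem_nhdsLT_of_mem (by constructor <;> norm_num :
      (0:ℝ) ∈ Set.Ioc (-1) 0)] with x hx
    exact hFconst (-1) x (le_of_lt hx.1) hx.2
  have hFval0 : -c * T 0 - Ds * gl = F (-1) :=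
    tendsto_nhds_unique hFleft (Filter.Tendsto.congr' (Filter.EventuallyEq.symm (hFeqLeft : F =ᶠ[nhdsWithin (0:ℝ) (Set.Iio 0)] fun _ => F (-1))) tendsto_const_nhds)
  -- solid side conclusion
  have hsolidEq : -c * T 0 - Ds * gl = -c * T₀ - Ds * 0 := hFval0.trans hFval.symm
  -- gas side
  have hGderiv : ∀ x > (0:ℝ), HasDerivAt G ((Qmol / cp) * ω x) x := by
    intro x hx
    have h1 := (hTd1 x (ne_of_gt hx)).hasDerivAt
    have h2 := (hTd2 x (ne_of_gt hx)).hasDerivAt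
    have : HasDerivAt G (mdot * deriv T x - (lamg / cp) * deriv (deriv T) x) x :=
      (h1.const_mul mdot).sub (h2.const_mul (lamg / cp))
    rwa [hgas x hx] at this
  have hωii : ∀ a b : ℝ, 0 < a → a ≤ b →
      IntervalIntegrable (fun x => (Qmol / cp) * ω x) MeasureTheory.volume a b := by
    intro a b ha hab
    refine (IntervalIntegrable.const_mul ?_ (Qmol / cp))
    rw [intervalIntegrable_iff_integrableOn_Ioc_of_le hab]
    exact hωint.mono_set (fun x hx => lt_of_lt_of_le ha hx.1.le)
  have hGftc : ∀ a b : ℝ, 0 < a → a ≤ b →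
      G b - G a = (Qmol / cp) * ∫ x in a..b, ω x := by
    intro a b ha hab
    have hderiv : ∀ x ∈ Set.uIcc a b, HasDerivAt G ((fun y => (Qmol / cp) * ω y) x) x := by
      intro x hx
      rw [Set.uIcc_of_le hab] at hx
      exact hGderiv x (lt_of_lt_of_le ha hx.1)
    have := intervalIntegral.integral_eq_sub_of_hasDerivAt hderiv (hωii a b ha hab)
    rw [intervalIntegral.integral_const_mul] at this
    linarith
  -- limit at +∞
  have hωint1 : MeasureTheory.IntegrableOn ω (Set.Ioi 1) :=
    hωint.mono_set (fun x hx => Set.mem_Ioi.mpr (lt_trans one_pos hx))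
  have hItop : Filter.Tendsto (fun b => (∫ x in (1:ℝ)..b, ω x)) Filter.atTop
      (nhds (∫ x in Set.Ioi (1:ℝ), ω x)) :=
    MeasureTheory.intervalIntegral_tendsto_integral_Ioi 1 hωint1 Filter.tendsto_id
  have hGtop : Filter.Tendsto G Filter.atTop (nhds (mdot * Tf - (lamg / cp) * 0)) :=
    (hTpinf.const_mul mdot).sub (hT'pinf.const_mul (lamg / cp))
  have hGtop2 : Filter.Tendsto G Filter.atTop
      (nhds (G 1 + (Qmol / cp) * ∫ x in Set.Ioi (1:ℝ), ω x)) := by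
    have h2 : Filter.Tendsto (fun b => G 1 + (Qmol / cp) * ∫ x in (1:ℝ)..b, ω x)
        Filter.atTop (nhds (G 1 + (Qmol / cp) * ∫ x in Set.Ioi (1:ℝ), ω x)) :=
      (tendsto_const_nhds).add (hItop.const_mul (Qmol / cp))
    refine h2.congr' ?_
    filter_upwards [Filter.eventually_ge_atTop (1:ℝ)] with b hb
    have := hGftc 1 b one_pos hb
    linarith
  have hGasTop : mdot * Tf - (lamg / cp) * 0
      = G 1 + (Qmol / cp) * ∫ x in Set.Ioi (1:ℝ), ω x :=
    tendsto_nhds_unique hGtop hGtop2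
  -- limit at 0⁺
  have hωIcc : MeasureTheory.IntegrableOn ω (Set.uIcc 0 1) := by
    rw [Set.uIcc_of_le (zero_le_one)]
    rw [integrableOn_Icc_iff_integrableOn_Ioc]
    exact hωint.mono_set (fun x hx => hx.1)
  have hprim : ContinuousOn (fun a => ∫ x in a..(1:ℝ), ω x) (Set.uIcc 0 1) :=
    intervalIntegral.continuousOn_primitive_interval_left hωIcc
  have h0mem : (0:ℝ) ∈ Set.uIcc (0:ℝ) 1 := Set.left_mem_uIcc
  have hprim0 : Filter.Tendsto (fun a => ∫ x in a..(1:ℝ), ω x)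
      (nhdsWithin 0 (Set.uIcc 0 1)) (nhds (∫ x in (0:ℝ)..1, ω x)) := hprim 0 h0mem
  have hle : nhdsWithin (0:ℝ) (Set.Ioi 0) ≤ nhdsWithin 0 (Set.uIcc 0 1) := by
    have h1 : nhdsWithin (0:ℝ) (Set.Ioi 0 ∩ Set.Iio 1) = nhdsWithin 0 (Set.Ioi 0) :=
      nhdsWithin_inter_of_mem' (mem_nhdsWithin_of_mem_nhds (Iio_mem_nhds one_pos))
    rw [← h1]
    apply nhdsWithin_mono
    rw [Set.uIcc_of_le zero_le_one]
    exact fun x hx => ⟨hx.1.le, hx.2.le⟩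
  have hprim0' : Filter.Tendsto (fun a => ∫ x in a..(1:ℝ), ω x)
      (nhdsWithin 0 (Set.Ioi 0)) (nhds (∫ x in (0:ℝ)..1, ω x)) := hprim0.mono_left hle
  have hT0right : Filter.Tendsto T (nhdsWithin 0 (Set.Ioi 0)) (nhds (T 0)) :=
    (hTcont.tendsto 0).mono_left nhdsWithin_le_nhds
  have hGright : Filter.Tendsto G (nhdsWithin 0 (Set.Ioi 0))
      (nhds (mdot * T 0 - (lamg / cp) * gr)) :=
    (hT0right.const_mul mdot).sub (hgr.const_mul (lamg / cp))
  have hGright2 : Filter.Tendsto G (nhdsWithin 0 (Set.Ioi 0))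
      (nhds (G 1 - (Qmol / cp) * ∫ x in (0:ℝ)..1, ω x)) := by
    have h2 : Filter.Tendsto (fun a => G 1 - (Qmol / cp) * ∫ x in a..(1:ℝ), ω x)
        (nhdsWithin 0 (Set.Ioi 0)) (nhds (G 1 - (Qmol / cp) * ∫ x in (0:ℝ)..1, ω x)) :=
      tendsto_const_nhds.sub (hprim0'.const_mul (Qmol / cp))
    refine h2.congr' ?_
    filter_upwards [Ioo_mem_nhdsGT_of_mem (by constructor <;> norm_num :
      (0:ℝ) ∈ Set.Ico (0:ℝ) 1)] with a ha
    have := hGftc a 1 ha.1 ha.2.le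
    linarith
  have hGas0 : mdot * T 0 - (lamg / cp) * gr
      = G 1 - (Qmol / cp) * ∫ x in (0:ℝ)..1, ω x :=
    tendsto_nhds_unique hGright hGright2
  -- combine the two integrals
  have hIoc01 : (∫ x in (0:ℝ)..1, ω x) = ∫ x in Set.Ioc (0:ℝ) 1, ω x :=
    intervalIntegral.integral_of_le zero_le_one
  have hsplit : (∫ x in Set.Ioc (0:ℝ) 1, ω x) + (∫ x in Set.Ioi (1:ℝ), ω x)
      = ∫ x in Set.Ioi (0:ℝ), ω x := by
    rw [← MeasureTheory.setIntegral_union (Set.Ioc_disjoint_Ioi le_rfl)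
      measurableSet_Ioi (hωint.mono_set (fun x hx => hx.1)) hωint1]
    rw [Set.Ioc_union_Ioi_eq_Ioi zero_le_one]
  -- final algebra
  have hmne : mdot ≠ 0 := ne_of_gt hmdotpos
  have hcpne : cp ≠ 0 := ne_of_gt hcp
  have hρcpne : ρs * cp ≠ 0 := by positivity
  have hlamsne : lams ≠ 0 := ne_of_gt hlams
  have hMne : M ≠ 0 := ne_of_gt hM
  have hνne : ν ≠ 0 := ne_of_lt hν
  have hMνne : M * ν ≠ 0 := mul_ne_zero hMne hνne
  have hgl_eq : lams * gl = mdot * cp * (T 0 - T₀) := by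
    have h := hsolidEq
    rw [hDs] at h
    field_simp at h
    rw [hmdot]
    linear_combination -h
  have hgasEq : (mdot * Tf * cp - (mdot * T 0 * cp - lamg * gr)) * (cp * (M * ν))
      = -(Qmol * mdot * cp) := by
    have h1 : mdot * Tf - (lamg / cp) * 0 - (mdot * T 0 - (lamg / cp) * gr)
        = (Qmol / cp) * ((∫ x in Set.Ioc (0:ℝ) 1, ω x) + (∫ x in Set.Ioi (1:ℝ), ω x)) := by
      rw [hGasTop, hGas0, hIoc01]; ring
    rw [hsplit, hωtot] at h1
    field_simp at h1
    linear_combination cp * h1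
  have hkey : cp * (Tf - T₀) * (M * ν) = -Qmol + (M * ν) * Qp := by
    apply mul_left_cancel₀ (mul_ne_zero hmne hcpne)
    linear_combination hgasEq - cp * (M * ν) * hgl_eq + cp * (M * ν) * hinterface
  field_simp
  linear_combination hkey
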